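/- Let G be a group, let λ ≥ 2 be a cardinal, and suppose the Brandt λ-extension B_λ(G) is a topological inverse semigroup. Let U be a non-empty open subset of B_λ(G) with U ≠ {0}. Then for every dense subset A of B_λ(G) one has A·U·A = B_λ(G), where A·U·A denotes the set of all products a·u·a' with a, a' ∈ A and u ∈ U. -/

import Mathlib

open Topology Pointwise

/-- `inv` witnesses that the semigroup `S` is an *inverse semigroup*:
for every `x`, `inv x` is the unique `y` with `x*y*x = x` and `y*x*y = y`. -/
structure IsInverseSemigroup (S : Type*) [Mul S] (inv : S → S) : Prop where
  mul_inv_mul : ∀ x : S, x * inv x * x = x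
  inv_mul_inv : ∀ x : S, inv x * x * inv x = inv x
  inv_unique : ∀ x y : S, x * y * x = x → y * x * y = y → y = inv x

/-- The Brandt `λ`-extension `B_λ(G)` of a group `G`, where `λ` is (the cardinal
of) the index type `ι`: the set `(ι × G × ι) ∪ {0}`. -/
abbrev Brandt (ι G : Type*) : Type _ := Option (ι × G × ι)

instance (ι G : Type*) : Zero (Brandt ι G) := ⟨(none : Option (ι × G × ι))⟩

/-- The non-zero element `(α, g, β)` of `B_λ(G)`. -/
def Brandt.elem {ι G : Type*} (α : ι) (g : G) (β : ι) : Brandt ι G := some (α, g, β)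

open Classical in
/-- Multiplication of the Brandt extension:
`(α,a,β)(γ,b,δ) = (α,ab,δ)` if `β = γ` and `0` otherwise, `0` being absorbing. -/
noncomputable instance (ι G : Type*) [Mul G] : Mul (Brandt ι G) :=
  ⟨fun x y =>
    match x, y with
    | some (α, a, β), some (γ, b, δ) =>
        if β = γ then (some (α, a * b, δ) : Option (ι × G × ι)) else none
    | _, _ => none⟩

section lemmas
variable {ι G : Type*} [Group G]

lemma brandt_none_mul (x : Brandt ι G) : (none : Brandt ι G) * x = none := rfl

lemma brandt_mul_none (x : Brandt ι G) : x * (none : Brandt ι G) = none := by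
  rcases x with _ | ⟨α, a, β⟩ <;> rfl

open Classical in
lemma brandt_some_mul_some (α : ι) (a : G) (β γ : ι) (b : G) (δ : ι) :
    (some (α, a, β) : Brandt ι G) * some (γ, b, δ) =
      if β = γ then (some (α, a * b, δ) : Brandt ι G) else none := rfl

variable {inv : Brandt ι G → Brandt ι G} (hinv : IsInverseSemigroup (Brandt ι G) inv)

include hinv

lemma brandt_inv_none : inv (none : Brandt ι G) = none :=
  (hinv.inv_unique none none rfl rfl).symm

lemma brandt_inv_some (α : ι) (g : G) (β : ι) :
    inv (some (α, g, β) : Brandt ι G) = some (β, g⁻¹, α) := by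
  refine (hinv.inv_unique _ _ ?_ ?_).symm <;>
    simp [brandt_some_mul_some]

lemma brandt_sandwich (t x y : Brandt ι G) :
    x * (inv x * t * inv y) * y = t ∨ x * (inv x * t * inv y) * y = none := by
  rcases x with _ | ⟨a1, a2, a3⟩
  · right
    simp [brandt_none_mul]
  rcases y with _ | ⟨b1, b2, b3⟩
  · right
    simp [brandt_inv_none hinv, brandt_mul_none, brandt_none_mul]
  rcases t with _ | ⟨c1, c2, c3⟩
  · right
    simp [brandt_inv_some hinv, brandt_mul_none, brandt_none_mul]
  · simp only [brandt_inv_some hinv, brandt_some_mul_some]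
    by_cases h1 : a1 = c1 <;> by_cases h2 : c3 = b3 <;>
      simp_all [brandt_some_mul_some, brandt_mul_none, brandt_none_mul] <;> group

end lemmas

lemma brandt_cont_mul {ι G : Type*} [Mul G] [TopologicalSpace (Brandt ι G)]
    (hc : Continuous fun p : Brandt ι G × Brandt ι G => p.1 * p.2)
    {X : Type*} [TopologicalSpace X] {f g : X → Brandt ι G}
    (hf : Continuous f) (hg : Continuous g) : Continuous fun x => f x * g x :=
  hc.comp (hf.prodMk hg)

/-- Let `G` be a group, `λ ≥ 2` a cardinal and suppose the
Brandt `λ`-extension `B_λ(G)` is a (Hausdorff) topological inverse semigroup.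
If `U` is a non-empty open subset of `B_λ(G)` with `U ≠ {0}`, then
`A·U·A = B_λ(G)` for every dense subset `A` of `B_λ(G)`. -/
theorem dense_mul_open_mul_dense_eq_univ_brandt
    {ι G : Type*} [Nontrivial ι] [Group G]
    [TopologicalSpace (Brandt ι G)] [T2Space (Brandt ι G)]
    (continuous_mul : Continuous fun p : Brandt ι G × Brandt ι G => p.1 * p.2)
    (inv : Brandt ι G → Brandt ι G)
    (hinv : IsInverseSemigroup (Brandt ι G) inv) (hinvc : Continuous inv)
    (U : Set (Brandt ι G)) (hUopen : IsOpen U) (hUne : U.Nonempty)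
    (hU0 : U ≠ {0}) :
    ∀ A : Set (Brandt ι G), Dense A → A * U * A = Set.univ := by
  intro A hA
  obtain ⟨u0, hu0U, hu0ne⟩ : ∃ u ∈ U, u ≠ (none : Brandt ι G) := by
    by_contra hcon
    push_neg at hcon
    exact hU0 (Set.eq_singleton_iff_nonempty_unique_mem.mpr ⟨hUne, fun x hx => hcon x hx⟩)
  obtain ⟨⟨α, g, β⟩, rfl⟩ : ∃ p, u0 = some p := Option.ne_none_iff_exists'.mp hu0ne
  have h0c : IsClosed ({(none : Brandt ι G)} : Set (Brandt ι G)) := isClosed_singleton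
  ext t
  simp only [Set.mem_univ, iff_true]
  rcases t with _ | ⟨γ, h, δ⟩
  · -- the zero element
    by_contra hcon
    have hAsub : ∀ a ∈ A, ∃ g' : G, a = some (β, g', α) := by
      intro a ha
      have key : (a * some (α, g, β)) * a ≠ none :=
        fun hk => hcon (hk ▸ Set.mul_mem_mul (Set.mul_mem_mul ha hu0U) ha)
      rcases a with _ | ⟨c1, c2, c3⟩
      · rw [brandt_none_mul, brandt_none_mul] at key; exact absurd rfl key
      · rw [brandt_some_mul_some] at key
        by_cases h3 : c3 = α
        · rw [if_pos h3, brandt_some_mul_some] at key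
          by_cases h1 : β = c1
          · exact ⟨c2, by rw [h3, ← h1]⟩
          · rw [if_neg h1] at key; exact absurd rfl key
        · rw [if_neg h3, brandt_none_mul] at key; exact absurd rfl key
    obtain ⟨α', hα'⟩ := exists_ne β
    have hf : Continuous fun x : Brandt ι G => (some (α', (1:G), α') : Brandt ι G) * x :=
      brandt_cont_mul continuous_mul continuous_const continuous_id
    have hsub : A ⊆ (fun x : Brandt ι G =>
        (some (α', (1:G), α') : Brandt ι G) * x) ⁻¹' {none} := by
      intro a ha
      obtain ⟨g', rfl⟩ := hAsub a ha
      simp [brandt_some_mul_some, hα']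
    have hall : ((some (α', (1:G), α') : Brandt ι G) * some (α', (1:G), α')) = none := by
      have hx : (some (α', (1:G), α') : Brandt ι G) ∈ closure A := by
        rw [hA.closure_eq]; trivial
      have := (IsClosed.closure_subset_iff (h0c.preimage hf)).mpr hsub hx
      simpa using this
    rw [brandt_some_mul_some, if_pos rfl] at hall
    exact Option.some_ne_none _ hall
  · -- a nonzero element
    have hΨ : Continuous fun p : Brandt ι G × Brandt ι G =>
        inv p.1 * some (γ, h, δ) * inv p.2 :=
      brandt_cont_mul continuous_mul (brandt_cont_mul continuous_mul (hinvc.comp continuous_fst) continuous_const) (hinvc.comp continuous_snd)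
    have hχ : Continuous fun p : Brandt ι G × Brandt ι G =>
        p.1 * (inv p.1 * some (γ, h, δ) * inv p.2) * p.2 :=
      brandt_cont_mul continuous_mul (brandt_cont_mul continuous_mul continuous_fst hΨ) continuous_snd
    have hΨ0 : inv (some (γ, (1:G), α) : Brandt ι G) * some (γ, h, δ) *
        inv (some (β, g⁻¹ * h, δ) : Brandt ι G) = some (α, g, β) := by
      rw [brandt_inv_some hinv, brandt_inv_some hinv]
      simp [brandt_some_mul_some, mul_inv_rev]
    have hχ0 : (some (γ, (1:G), α) : Brandt ι G) *
        (inv (some (γ, (1:G), α) : Brandt ι G) * some (γ, h, δ) *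
          inv (some (β, g⁻¹ * h, δ) : Brandt ι G)) * some (β, g⁻¹ * h, δ) =
        some (γ, h, δ) := by
      rw [hΨ0]
      simp [brandt_some_mul_some]
    set O : Set (Brandt ι G × Brandt ι G) :=
      ((fun p : Brandt ι G × Brandt ι G => inv p.1 * some (γ, h, δ) * inv p.2) ⁻¹' U) ∩
      ((fun p : Brandt ι G × Brandt ι G =>
        p.1 * (inv p.1 * some (γ, h, δ) * inv p.2) * p.2) ⁻¹' ({none}ᶜ)) with hO
    have hOopen : IsOpen O := (hUopen.preimage hΨ).inter (h0c.isOpen_compl.preimage hχ)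
    have hOmem : ((some (γ, (1:G), α) : Brandt ι G), (some (β, g⁻¹ * h, δ) : Brandt ι G)) ∈ O := by
      refine ⟨Set.mem_preimage.mpr ?_, fun hk => Option.some_ne_none _ (hχ0.symm.trans hk)⟩
      show inv (some (γ, (1:G), α) : Brandt ι G) * some (γ, h, δ) *
          inv (some (β, g⁻¹ * h, δ) : Brandt ι G) ∈ U
      rw [hΨ0]; exact hu0U
    obtain ⟨⟨a, a'⟩, hPO, hPA⟩ :=
      (hA.prod hA).inter_open_nonempty O hOopen ⟨_, hOmem⟩
    have haA : a ∈ A := hPA.1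
    have ha'A : a' ∈ A := hPA.2
    have huU : inv a * some (γ, h, δ) * inv a' ∈ U := hPO.1
    have hne0 : a * (inv a * some (γ, h, δ) * inv a') * a' ≠ none := hPO.2
    rcases brandt_sandwich hinv (some (γ, h, δ)) a a' with heq | heq
    · rw [← heq]
      exact Set.mul_mem_mul (Set.mul_mem_mul haA huU) ha'A
    · exact absurd heq hne0
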